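/- If (T,t) and (T',t') are two discriminating symbolically dated phylogenetic trees on X with δ_(T,t)(x,y,z) = δ_(T',t')(x,y,z) for all x,y,z ∈ X, then (T,t) and (T',t') are isomorphic: there is a graph isomorphism φ from T to T' that fixes every element of X and satisfies t'(φ(v)) = t(v) for every vertex v of T. -/

import Mathlib

namespace PhyloPaper

variable {V X M : Type}

/-- The degree of a vertex: the number of its neighbors. -/
noncomputable def deg (G : SimpleGraph V) (v : V) : ℕ := (G.neighborSet v).ncard

/-- `v` lies on the (unique, in a tree) path between `x` and `y`. -/
def OnPath (G : SimpleGraph V) (x y v : V) : Prop :=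
  ∀ p : G.Walk x y, p.IsPath → v ∈ p.support

/-- `m` is a median of `x, y, z`: it lies on all three pairwise paths. -/
def IsMedian (G : SimpleGraph V) (x y z m : V) : Prop :=
  OnPath G x y m ∧ OnPath G y z m ∧ OnPath G x z m

/-- An (unrooted) phylogenetic tree on `X`: a tree whose leaf set is (the image of) `X`
and which has no vertex of degree 2. -/
structure IsPhyloTree (G : SimpleGraph V) (leaf : X → V) : Prop where
  isTree : G.IsTree
  leaf_inj : Function.Injective leaf
  leaf_iff : ∀ v : V, (∃ x : X, leaf x = v) ↔ deg G v = 1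
  no_deg_two : ∀ v : V, deg G v ≠ 2

/-- A phylogenetic tree is binary if every interior vertex (degree ≥ 2) has degree 3. -/
def IsBinary (G : SimpleGraph V) : Prop := ∀ v : V, 2 ≤ deg G v → deg G v = 3

/-- A symbolic dating map sends every leaf to `⊙` (modelled as `none`). -/
def IsDatingMap (leaf : X → V) (t : V → Option M) : Prop := ∀ x : X, t (leaf x) = none

/-- A dating map is discriminating if adjacent vertices get different values. -/
def Discriminating (G : SimpleGraph V) (t : V → Option M) : Prop :=
  ∀ u v : V, G.Adj u v → t u ≠ t v

/-- `δ` is the ternary map induced by the dated tree `(G, leaf, t)`: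
`δ x y z = t (med (leaf x) (leaf y) (leaf z))`. -/
def InducedDelta (G : SimpleGraph V) (leaf : X → V) (t : V → Option M)
    (δ : X → X → X → Option M) : Prop :=
  ∀ x y z : X, ∃ m : V, IsMedian G (leaf x) (leaf y) (leaf z) m ∧ δ x y z = t m

/-- The (well-defined, for symmetric `δ`) value of `δ` on a 3-element subset `T` is `a`. -/
def ValOn (δ : X → X → X → Option M) [DecidableEq X] (T : Finset X) (a : Option M) : Prop :=
  ∃ x y z : X, x ≠ y ∧ x ≠ z ∧ y ≠ z ∧ T = {x, y, z} ∧ δ x y z = a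

/-- `S` is `n`-`m` partitioned by `δ`: `δ` takes exactly two values on the 3-element
subsets of `S`, one value on exactly `n` of them and the other on exactly `m` of them. -/
def Partitioned [DecidableEq X] (δ : X → X → X → Option M) (S : Finset X) (n m : ℕ) : Prop :=
  ∃ a b : Option M, a ≠ b ∧
    {T : Finset X | T ∈ S.powersetCard 3 ∧ ValOn δ T a}.ncard = n ∧
    {T : Finset X | T ∈ S.powersetCard 3 ∧ ValOn δ T b}.ncard = m ∧
    ∀ T ∈ S.powersetCard 3, ValOn δ T a ∨ ValOn δ T b

/-- Condition (1): `δ` is symmetric under all permutations of its arguments. -/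
def Symm3 (δ : X → X → X → Option M) : Prop :=
  ∀ x y z : X, δ x y z = δ y x z ∧ δ x y z = δ x z y ∧ δ x y z = δ z y x

/-- Condition (2): `δ x y z = ⊙` iff `x, y, z` are not pairwise distinct. -/
def VanishCond (δ : X → X → X → Option M) : Prop :=
  ∀ x y z : X, δ x y z = none ↔ (x = y ∨ y = z ∨ x = z)

/-- `a, b, c, d` are pairwise distinct. -/
def P4 (a b c d : X) : Prop := a ≠ b ∧ a ≠ c ∧ a ≠ d ∧ b ≠ c ∧ b ≠ d ∧ c ≠ d

/-- `a, b, c, d, e` are pairwise distinct. -/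
def P5 (a b c d e : X) : Prop := P4 a b c d ∧ a ≠ e ∧ b ≠ e ∧ c ≠ e ∧ d ≠ e

/-- Condition (3): on four distinct taxa `δ` takes at most 2 values, and if exactly 2,
then the 4-set is 2-2 partitioned. -/
def FourPointCond [DecidableEq X] (δ : X → X → X → Option M) : Prop :=
  ∀ x y z u : X, P4 x y z u →
    ({δ x y z, δ x y u, δ x z u, δ y z u} : Set (Option M)).ncard ≤ 2 ∧
    (({δ x y z, δ x y u, δ x z u, δ y z u} : Set (Option M)).ncard = 2 →
      Partitioned δ ({x, y, z, u} : Finset X) 2 2)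

/-- Condition (4): no 5-element subset of `X` is 5-5 partitioned by `δ`. -/
def FivePointCond [DecidableEq X] (δ : X → X → X → Option M) : Prop :=
  ∀ S : Finset X, S.card = 5 → ¬ Partitioned δ S 5 5

/-- A symbolic ternary metric. -/
def IsSymbolicTernaryMetric [DecidableEq X] (δ : X → X → X → Option M) : Prop :=
  Symm3 δ ∧ VanishCond δ ∧ FourPointCond δ ∧ FivePointCond δ

/-- Condition (*): `δ` is fully resolved. -/
def FullyResolved [DecidableEq X] (δ : X → X → X → Option M) : Prop :=
  ∀ x y z u : X, P4 x y z u →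
    ({δ x y z, δ x y u, δ x z u, δ y z u} : Set (Option M)).ncard = 1 →
    ∃ e : X, Partitioned δ ({x, y, z, u, e} : Finset X) 4 6

/-- The tree displays the quartet `ab|cd`: the path from `a` to `b` is
vertex-disjoint from the path from `c` to `d`. -/
def Displays (G : SimpleGraph V) (leaf : X → V) (a b c d : X) : Prop :=
  ∃ p : G.Walk (leaf a) (leaf b), p.IsPath ∧
    ∃ q : G.Walk (leaf c) (leaf d), q.IsPath ∧ ∀ v : V, v ∈ p.support → v ∉ q.support

/-- `Q a b c d` represents membership of the quartet `ab|cd`; a quartet system must be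
invariant under the symmetries of quartets and only contain genuine quartets. -/
def IsQuartetSystem (Q : X → X → X → X → Prop) : Prop :=
  ∀ a b c d : X, (Q a b c d → P4 a b c d) ∧ (Q a b c d ↔ Q b a c d) ∧
    (Q a b c d ↔ Q a b d c) ∧ (Q a b c d ↔ Q c d a b)

/-- Thin: at most one of the three quartets on any 4 taxa. -/
def Thin (Q : X → X → X → X → Prop) : Prop :=
  ∀ a b c d : X, P4 a b c d →
    ¬(Q a b c d ∧ Q a c b d) ∧ ¬(Q a b c d ∧ Q a d b c) ∧ ¬(Q a c b d ∧ Q a d b c)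

/-- Transitive quartet system. -/
def TransitiveQ (Q : X → X → X → X → Prop) : Prop :=
  ∀ a b c d e : X, P5 a b c d e → Q a b c e → Q a b d e → Q a b c d

/-- Saturated quartet system. -/
def SaturatedQ (Q : X → X → X → X → Prop) : Prop :=
  ∀ a b c d e : X, P5 a b c d e → Q a b c d → (Q a e c d ∨ Q a b c e)

/-- Complete: exactly one of the three quartets on any 4 distinct taxa. -/
def CompleteQ (Q : X → X → X → X → Prop) : Prop :=
  ∀ a b c d : X, P4 a b c d →
    (Q a b c d ∨ Q a c b d ∨ Q a d b c) ∧
    ¬(Q a b c d ∧ Q a c b d) ∧ ¬(Q a b c d ∧ Q a d b c) ∧ ¬(Q a c b d ∧ Q a d b c)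

/-- `δ` generates the quartet `xy|zu`. -/
def Generates (δ : X → X → X → Option M) (x y z u : X) : Prop :=
  P4 x y z u ∧
  ((δ x z u = δ y z u ∧ δ y z u ≠ δ x y z ∧ δ x y z = δ x y u) ∨
   (δ x y z = δ x y u ∧ δ x y u = δ x z u ∧ δ x z u = δ y z u ∧
    ∃ e : X, δ x y e = δ x y z ∧ δ z u e = δ x y z ∧
      δ x u e ≠ δ x y z ∧ δ x u e = δ x z e ∧ δ x z e = δ y z e ∧ δ y z e = δ y u e))

/-- A rooted phylogenetic tree on `X` with root `ρ`: a tree whose leaves (in the rooted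
sense: out-degree 0, i.e. non-root vertices of degree 1) are exactly the image of `X`,
and with no non-root vertex of in-degree one and out-degree one (i.e. degree 2). -/
structure IsRootedPhyloTree (G : SimpleGraph V) (ρ : V) (leaf : X → V) : Prop where
  isTree : G.IsTree
  leaf_inj : Function.Injective leaf
  leaf_iff : ∀ v : V, (∃ x : X, leaf x = v) ↔ (v ≠ ρ ∧ deg G v = 1)
  no_in_out_deg_one : ∀ v : V, v ≠ ρ → deg G v ≠ 2

/-- `d` is the binary map induced by the rooted dated tree:
`d x y = t (lca x y)`, where the last common ancestor is the median of `ρ, x, y`. -/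
def InducedD (G : SimpleGraph V) (ρ : V) (leaf : X → V) (t : V → Option M)
    (d : X → X → Option M) : Prop :=
  ∀ x y : X, ∃ m : V, IsMedian G ρ (leaf x) (leaf y) m ∧ d x y = t m

/-- Symbolic ultrametric: conditions (U1)-(U4). -/
def IsSymbolicUltrametric (d : X → X → Option M) : Prop :=
  (∀ x y : X, d x y = none ↔ x = y) ∧
  (∀ x y : X, d x y = d y x) ∧
  (∀ x y z : X, ({d x y, d x z, d y z} : Set (Option M)).ncard ≤ 2) ∧
  ¬ ∃ x y u v : X, P4 x y u v ∧ d x y = d y u ∧ d y u = d u v ∧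
      d u v ≠ d y v ∧ d y v = d x v ∧ d x v = d x u

/-- `x` and `y` are `m`-equivalent with respect to `δ`. -/
def MEquiv (δ : X → X → X → Option M) (m : Option M) (x y : X) : Prop :=
  (∃ z : X, δ x y z = m) ∧
  ∀ u v : X, u ≠ x → u ≠ y → v ≠ x → v ≠ y → (δ x u v = m ↔ δ y u v = m)

/-- `x ∼_δ y`: `x` and `y` are `m`-equivalent for some `m`. -/
def DeltaEquiv (δ : X → X → X → Option M) (x y : X) : Prop :=
  ∃ m : Option M, MEquiv δ m x y

/-- `C` is a pseudo-cherry of the tree: `C` has at least 2 elements and is exactly the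
set of leaves adjacent to some interior vertex `v`. -/
def IsPseudoCherry (G : SimpleGraph V) (leaf : X → V) (C : Set X) : Prop :=
  2 ≤ C.ncard ∧ ∃ v : V, 2 ≤ deg G v ∧ C = {x : X | G.Adj (leaf x) v}

open SimpleGraph

section TreeGeom

variable {G : SimpleGraph V}

/-- The unique path in a tree. -/
noncomputable def tp (hG : G.IsTree) (u v : V) : G.Walk u v :=
  (hG.existsUnique_path u v).exists.choose

lemma tp_isPath (hG : G.IsTree) (u v : V) : (tp hG u v).IsPath :=
  (hG.existsUnique_path u v).exists.choose_spec

lemma tp_eq (hG : G.IsTree) {u v : V} (p : G.Walk u v) (hp : p.IsPath) : p = tp hG u v :=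
  (hG.existsUnique_path u v).unique hp (tp_isPath hG u v)

/-- Betweenness: `w` on the unique path from `u` to `v`. -/
def Btw (hG : G.IsTree) (u w v : V) : Prop := w ∈ (tp hG u v).support

lemma btw_left (hG : G.IsTree) (u v : V) : Btw hG u u v := Walk.start_mem_support _

lemma btw_right (hG : G.IsTree) (u v : V) : Btw hG u v v := Walk.end_mem_support _

lemma tp_reverse (hG : G.IsTree) (u v : V) : (tp hG u v).reverse = tp hG v u :=
  tp_eq hG _ ((tp_isPath hG u v).reverse)

lemma btw_symm (hG : G.IsTree) {u w v : V} (h : Btw hG u w v) : Btw hG v w u := by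
  unfold Btw at *
  rw [← tp_reverse hG u v, Walk.support_reverse, List.mem_reverse]
  exact h

lemma tp_self (hG : G.IsTree) (u : V) : tp hG u u = Walk.nil :=
  (tp_eq hG Walk.nil Walk.IsPath.nil).symm

lemma btw_self (hG : G.IsTree) {u c : V} (h : Btw hG u c u) : c = u := by
  unfold Btw at h
  rw [tp_self] at h
  simpa using h

lemma tp_append (hG : G.IsTree) {u w v : V} (h : Btw hG u w v) :
    tp hG u v = (tp hG u w).append (tp hG w v) := by
  classical
  have h1 : (tp hG u v).takeUntil w h = tp hG u w :=
    tp_eq hG _ ((tp_isPath hG u v).takeUntil h)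
  have h2 : (tp hG u v).dropUntil w h = tp hG w v :=
    tp_eq hG _ ((tp_isPath hG u v).dropUntil h)
  rw [← h1, ← h2]
  exact (Walk.take_spec (tp hG u v) h).symm

lemma btw_iff_append (hG : G.IsTree) {u w v c : V} (h : Btw hG u w v) :
    Btw hG u c v ↔ Btw hG u c w ∨ Btw hG w c v := by
  unfold Btw
  rw [tp_append hG h, Walk.mem_support_append_iff]

lemma btw_prefix (hG : G.IsTree) {u w v c : V} (h : Btw hG u w v) (h1 : Btw hG u c w) :
    Btw hG u c v := (btw_iff_append hG h).2 (Or.inl h1)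

lemma btw_suffix (hG : G.IsTree) {u w v c : V} (h : Btw hG u w v) (h1 : Btw hG w c v) :
    Btw hG u c v := (btw_iff_append hG h).2 (Or.inr h1)

lemma btw_inter (hG : G.IsTree) {u w v c : V} (h : Btw hG u w v)
    (h1 : Btw hG u c w) (h2 : Btw hG w c v) : c = w := by
  by_contra hc
  have hnd := (tp_isPath hG u v).support_nodup
  rw [tp_append hG h, Walk.support_append] at hnd
  have hdisj := List.disjoint_of_nodup_append hnd
  have h3 : c ∈ w :: (tp hG w v).support.tail := (tp hG w v).support_eq_cons ▸ h2
  rcases List.mem_cons.1 h3 with h' | h'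
  · exact hc h'
  · exact hdisj h1 h'

lemma btw_glue (hG : G.IsTree) {u w v : V}
    (H : ∀ c, Btw hG u c w → Btw hG w c v → c = w) : Btw hG u w v := by
  classical
  have hnd1 := (tp_isPath hG u w).support_nodup
  have hnd2 := (tp_isPath hG w v).support_nodup
  have hpath : ((tp hG u w).append (tp hG w v)).IsPath := by
    apply Walk.IsPath.mk'
    rw [Walk.support_append]
    apply List.Nodup.append hnd1
    · have := (tp hG w v).support_eq_cons ▸ hnd2
      exact this.tail
    · intro a ha hta
      have ha2 : a ∈ (tp hG w v).support := by
        rw [(tp hG w v).support_eq_cons]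
        exact List.mem_cons_of_mem _ hta
      have haw : a = w := H a ha ha2
      rw [haw] at hta
      have := (tp hG w v).support_eq_cons ▸ hnd2
      exact (List.nodup_cons.1 this).1 hta
  have := tp_eq hG _ hpath
  unfold Btw
  rw [← this]
  rw [Walk.mem_support_append_iff]
  exact Or.inl (btw_right hG u w)

lemma btw_sandwich (hG : G.IsTree) {x a z v : V} (h1 : Btw hG x a z) (h2 : Btw hG a v z) :
    Btw hG x a v := by
  apply btw_glue
  intro c hc1 hc2
  exact btw_inter hG h1 hc1 (btw_prefix hG h2 hc2)

lemma btw_mirror (hG : G.IsTree) {x a z v : V} (h1 : Btw hG x a z) (h2 : Btw hG x v a) :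
    Btw hG v a z := by
  apply btw_glue
  intro c hc1 hc2
  exact btw_inter hG h1 (btw_suffix hG h2 hc1) hc2

lemma btw_antisymm (hG : G.IsTree) {x a b : V} (h1 : Btw hG x a b) (h2 : Btw hG x b a) :
    a = b :=
  btw_inter hG h2 h1 (btw_right hG b a)

lemma btw_total (hG : G.IsTree) {x y a b : V} (h1 : Btw hG x a y) (h2 : Btw hG x b y) :
    Btw hG x a b ∨ Btw hG x b a := by
  rcases (btw_iff_append hG h2).1 h1 with h | h
  · exact Or.inl h
  · exact Or.inr (btw_sandwich hG h2 h)

lemma tp_adj (hG : G.IsTree) {u v : V} (h : G.Adj u v) :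
    tp hG u v = Walk.cons h Walk.nil := by
  refine (tp_eq hG _ ?_).symm
  rw [Walk.cons_isPath_iff]
  refine ⟨Walk.IsPath.nil, ?_⟩
  simp [h.ne]

lemma btw_adj (hG : G.IsTree) {u v c : V} (h : G.Adj u v) (hc : Btw hG u c v) :
    c = u ∨ c = v := by
  unfold Btw at hc
  rw [tp_adj hG h] at hc
  simpa using hc

/-- Medians -/
def IsMed (hG : G.IsTree) (x y z m : V) : Prop :=
  Btw hG x m y ∧ Btw hG y m z ∧ Btw hG x m z

lemma walk_eq_of_length_zero {u v : V} (p : G.Walk u v) (h : p.length = 0) : u = v := by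
  have h0 := p.getVert_zero
  have h1 := p.getVert_length
  rw [h] at h1
  rw [h0] at h1
  exact h1

lemma med_existsUnique (hG : G.IsTree) (x y z : V) : ∃! m, IsMed hG x y z m := by
  classical
  set S : Set ℕ :=
    {n | ∃ c, Btw hG x c y ∧ Btw hG x c z ∧ (tp hG x c).length = n} with hS
  have hne : S.Nonempty := by
    refine ⟨(tp hG x x).length, x, btw_left hG x y, btw_left hG x z, rfl⟩
  have hbdd : BddAbove S := by
    refine ⟨(tp hG x y).length, ?_⟩
    rintro n ⟨c, hcy, hcz, rfl⟩
    have := tp_append hG hcy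
    calc (tp hG x c).length ≤ (tp hG x c).length + (tp hG c y).length := Nat.le_add_right _ _
      _ = (tp hG x y).length := by rw [this, Walk.length_append]
  obtain ⟨m, hmy, hmz, hmlen⟩ := Nat.sSup_mem hne hbdd
  have hmax : ∀ c, Btw hG x c y → Btw hG x c z → (tp hG x c).length ≤ (tp hG x m).length := by
    intro c h1 h2
    rw [hmlen]
    exact le_csSup hbdd ⟨c, h1, h2, rfl⟩
  -- key: anything between x..c with m between x and c, c in S forces c = m
  have hkey : ∀ c, Btw hG x c y → Btw hG x c z → Btw hG x m c → c = m := by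
    intro c h1 h2 h3
    have := tp_append hG h3
    have hlen : (tp hG x c).length = (tp hG x m).length + (tp hG m c).length := by
      rw [this, Walk.length_append]
    have hle := hmax c h1 h2
    have : (tp hG m c).length = 0 := by omega
    exact (walk_eq_of_length_zero _ this).symm
  have hyz : Btw hG y m z := by
    apply btw_glue
    intro c hc1 hc2
    have hcy : Btw hG x c y := btw_suffix hG hmy (btw_symm hG hc1)
    have hcz : Btw hG x c z := btw_suffix hG hmz hc2
    exact hkey c hcy hcz (btw_sandwich hG hmz hc2)
  refine ⟨m, ⟨hmy, hyz, hmz⟩, ?_⟩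
  rintro m' ⟨h1, h2, h3⟩
  rcases btw_total hG hmy h1 with h | h
  · exact hkey m' h1 h3 h
  · have hm'y : Btw hG m' m y := btw_mirror hG hmy h
    have hm'z : Btw hG m' m z := btw_mirror hG hmz h
    exact (btw_inter hG h2 (btw_symm hG hm'y) hm'z).symm

noncomputable def med (hG : G.IsTree) (x y z : V) : V :=
  (med_existsUnique hG x y z).exists.choose

lemma med_isMed (hG : G.IsTree) (x y z : V) : IsMed hG x y z (med hG x y z) :=
  (med_existsUnique hG x y z).exists.choose_spec

lemma med_unique (hG : G.IsTree) {x y z m : V} (h : IsMed hG x y z m) : med hG x y z = m :=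
  ((med_existsUnique hG x y z).unique (med_isMed hG x y z) h)

lemma med_btw₁ (hG : G.IsTree) (x y z : V) : Btw hG x (med hG x y z) y :=
  (med_isMed hG x y z).1

lemma med_btw₂ (hG : G.IsTree) (x y z : V) : Btw hG y (med hG x y z) z :=
  (med_isMed hG x y z).2.1

lemma med_btw₃ (hG : G.IsTree) (x y z : V) : Btw hG x (med hG x y z) z :=
  (med_isMed hG x y z).2.2

lemma med_swap₁₂ (hG : G.IsTree) (x y z : V) : med hG y x z = med hG x y z := by
  apply med_unique
  obtain ⟨h1, h2, h3⟩ := med_isMed hG x y z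
  exact ⟨btw_symm hG h1, h3, h2⟩

lemma med_swap₂₃ (hG : G.IsTree) (x y z : V) : med hG x z y = med hG x y z := by
  apply med_unique
  obtain ⟨h1, h2, h3⟩ := med_isMed hG x y z
  exact ⟨h3, btw_symm hG h2, h1⟩

lemma med_swap₁₃ (hG : G.IsTree) (x y z : V) : med hG z y x = med hG x y z := by
  apply med_unique
  obtain ⟨h1, h2, h3⟩ := med_isMed hG x y z
  exact ⟨btw_symm hG h2, btw_symm hG h1, btw_symm hG h3⟩

lemma med_self₁ (hG : G.IsTree) (x y : V) : med hG x x y = x :=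
  med_unique hG ⟨btw_self' hG x, btw_left hG x y, btw_left hG x y⟩
  where btw_self' (hG : G.IsTree) (x : V) : Btw hG x x x := btw_left hG x x

lemma med_self₂ (hG : G.IsTree) (x y : V) : med hG x y y = y :=
  med_unique hG ⟨btw_right hG x y, btw_right hG y y, btw_right hG x y⟩

lemma med_self₃ (hG : G.IsTree) (x y : V) : med hG x y x = x :=
  med_unique hG ⟨btw_left hG x y, btw_symm hG (btw_left hG x y), btw_left hG x x⟩

lemma med_reduce (hG : G.IsTree) {x v a b : V} (h1 : Btw hG x v a) (h2 : Btw hG x v b) :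
    med hG x a b = med hG v a b := by
  apply med_unique
  obtain ⟨m1, m2, m3⟩ := med_isMed hG v a b
  exact ⟨btw_suffix hG h1 m1, m2, btw_suffix hG h2 m3⟩

lemma med_eq_left_of_btw (hG : G.IsTree) {x y z : V} (h : Btw hG y x z) : med hG x y z = x :=
  med_unique hG ⟨btw_left hG x y, h, btw_left hG x z⟩

/-- J1: the leg of the median tripod meets the cross path only at the median. -/
lemma leg_inter (hG : G.IsTree) {x y z m c : V} (hm : med hG x y z = m)
    (h1 : Btw hG z c m) (h2 : Btw hG x c y) : c = m := by
  subst hm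
  refine (med_unique hG ⟨h2, ?_, ?_⟩).symm
  · exact btw_suffix hG (med_btw₂ hG x y z) (btw_symm hG h1)
  · exact btw_suffix hG (med_btw₃ hG x y z) (btw_symm hG h1)

/-- J2: a point on the leg has the same junction. -/
lemma med_of_leg (hG : G.IsTree) {x y z m c : V} (hm : med hG x y z = m)
    (hc : Btw hG m c z) : med hG x y c = m := by
  apply med_unique
  refine ⟨hm ▸ med_btw₁ hG x y z, ?_, ?_⟩
  · exact btw_sandwich hG (hm ▸ med_btw₂ hG x y z) hc
  · exact btw_sandwich hG (hm ▸ med_btw₃ hG x y z) hc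

/-- The first step (direction) from `u` towards `s`. -/
noncomputable def dirV (hG : G.IsTree) (u s : V) : V := (tp hG u s).getVert 1

lemma tp_length_pos (hG : G.IsTree) {u s : V} (h : u ≠ s) : 0 < (tp hG u s).length := by
  rcases Nat.eq_zero_or_pos (tp hG u s).length with h0 | h0
  · exact absurd (walk_eq_of_length_zero _ h0) h
  · exact h0

lemma dirV_adj (hG : G.IsTree) {u s : V} (h : u ≠ s) : G.Adj u (dirV hG u s) := by
  have := (tp hG u s).adj_getVert_succ (tp_length_pos hG h)
  rwa [Walk.getVert_zero] at this

lemma dirV_btw (hG : G.IsTree) (u s : V) : Btw hG u (dirV hG u s) s := by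
  unfold Btw dirV
  rw [Walk.mem_support_iff_exists_getVert]
  rcases Nat.lt_or_ge 1 ((tp hG u s).length + 1) with h | h
  · exact ⟨1, rfl, by omega⟩
  · have h0 : (tp hG u s).length = 0 := by omega
    refine ⟨0, ?_, by omega⟩
    rw [Walk.getVert_zero, (tp hG u s).getVert_of_length_le (by omega)]
    exact (walk_eq_of_length_zero _ h0)

lemma dirV_eq_of_btw (hG : G.IsTree) {u w s : V} (h : Btw hG u w s) (hw : w ≠ u) :
    dirV hG u w = dirV hG u s := by
  unfold dirV
  rw [tp_append hG h, Walk.getVert_append]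
  have : 0 < (tp hG u w).length := tp_length_pos hG (Ne.symm hw)
  rcases Nat.lt_or_ge 1 (tp hG u w).length with h1 | h1
  · rw [if_pos h1]
  · have h1' : (tp hG u w).length = 1 := by omega
    rw [if_neg (by omega), h1', Nat.sub_self, Walk.getVert_zero,
      ← h1', Walk.getVert_length]

lemma dirV_adj_eq (hG : G.IsTree) {u n : V} (h : G.Adj u n) : dirV hG u n = n := by
  unfold dirV
  rw [tp_adj hG h]
  rfl

lemma btw_of_dirV_ne (hG : G.IsTree) {u a b : V} (ha : a ≠ u) (hb : b ≠ u)
    (h : dirV hG u a ≠ dirV hG u b) : Btw hG a u b := by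
  apply btw_glue
  intro c hc1 hc2
  by_contra hcu
  have e1 : dirV hG u c = dirV hG u a := dirV_eq_of_btw hG (btw_symm hG hc1) hcu
  have e2 : dirV hG u c = dirV hG u b := dirV_eq_of_btw hG hc2 hcu
  exact h (e1 ▸ e2)

lemma dirV_ne_of_btw (hG : G.IsTree) {u a b : V} (h : Btw hG a u b) (ha : a ≠ u) (hb : b ≠ u) :
    dirV hG u a ≠ dirV hG u b := by
  intro he
  have h1 : Btw hG a (dirV hG u a) u := btw_symm hG (dirV_btw hG u a)
  have h2 : Btw hG u (dirV hG u b) b := dirV_btw hG u b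
  have := btw_inter hG h (he ▸ h1) h2
  exact (G.ne_of_adj (dirV_adj hG (Ne.symm ha))).symm (he ▸ this)

section Deg
variable [Fintype V]

lemma two_le_deg_of_adj_ne (hG : G.IsTree) {v a b : V} (ha : G.Adj v a) (hb : G.Adj v b)
    (hab : a ≠ b) : 2 ≤ deg G v := by
  have : ({a, b} : Set V) ⊆ G.neighborSet v := by
    intro c hc; rcases hc with rfl | rfl
    · exact ha
    · exact hb
  calc 2 = ({a, b} : Set V).ncard := (Set.ncard_pair hab).symm
    _ ≤ _ := Set.ncard_le_ncard this (Set.toFinite _)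

lemma exists_third_nbr {v a b : V} (ha : G.Adj v a) (hb : G.Adj v b)
    (hab : a ≠ b) (hd : deg G v ≠ 2) : ∃ n, G.Adj v n ∧ n ≠ a ∧ n ≠ b := by
  by_contra hno
  push_neg at hno
  have hsub : G.neighborSet v ⊆ {a, b} := by
    intro c hc
    rcases eq_or_ne c a with rfl | h
    · exact Or.inl rfl
    · exact Or.inr (hno c hc h)
  have hsub2 : ({a, b} : Set V) ⊆ G.neighborSet v := by
    intro c hc; rcases hc with rfl | rfl
    · exact ha
    · exact hb
  have : G.neighborSet v = {a, b} := Set.Subset.antisymm hsub hsub2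
  apply hd
  rw [deg, this, Set.ncard_pair hab]

lemma deg_one_unique {v n n' : V} (hd : deg G v = 1) (h1 : G.Adj v n) (h2 : G.Adj v n') :
    n = n' := by
  obtain ⟨a, ha⟩ := Set.ncard_eq_one.1 hd
  have e1 : n ∈ ({a} : Set V) := ha ▸ h1
  have e2 : n' ∈ ({a} : Set V) := ha ▸ h2
  simp only [Set.mem_singleton_iff] at e1 e2
  rw [e1, e2]

lemma two_le_deg_of_btw (hG : G.IsTree) {x v y : V} (h : Btw hG x v y) (hx : v ≠ x)
    (hy : v ≠ y) : 2 ≤ deg G v :=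
  two_le_deg_of_adj_ne hG (dirV_adj hG hx) (dirV_adj hG hy)
    (dirV_ne_of_btw hG h (Ne.symm hx) (Ne.symm hy))

lemma leaf_btw_eq (hG : G.IsTree) {x v y : V} (hd : deg G v = 1) (h : Btw hG x v y) :
    v = x ∨ v = y := by
  by_contra hc
  push_neg at hc
  have := two_le_deg_of_btw hG h hc.1 hc.2
  omega

lemma exists_leaf_beyond (hG : G.IsTree) {u n : V} (h : G.Adj u n) :
    ∃ w, deg G w = 1 ∧ Btw hG u n w := by
  classical
  set S : Set ℕ := {k | ∃ w, Btw hG u n w ∧ (tp hG u w).length = k} with hS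
  have hne : S.Nonempty := ⟨(tp hG u n).length, n, btw_right hG u n, rfl⟩
  have hbdd : BddAbove S := by
    refine ⟨Fintype.card V, ?_⟩
    rintro k ⟨w, _, rfl⟩
    exact le_of_lt ((tp_isPath hG u w).length_lt)
  obtain ⟨w, hw, hwlen⟩ := Nat.sSup_mem hne hbdd
  have hmax : ∀ w', Btw hG u n w' → (tp hG u w').length ≤ (tp hG u w).length := by
    intro w' h'
    rw [hwlen]
    exact le_csSup hbdd ⟨w', h', rfl⟩
  have hwu : w ≠ u := by
    rintro rfl
    exact h.ne (btw_self hG hw).symm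
  refine ⟨w, ?_, hw⟩
  -- every neighbor of w equals dirV w u
  have huniq : ∀ n', G.Adj w n' → n' = dirV hG w u := by
    intro n' hn'
    by_contra hne'
    have hb : Btw hG u w n' := by
      apply btw_of_dirV_ne hG (Ne.symm hwu) (G.ne_of_adj hn').symm
      intro he
      rw [dirV_adj_eq hG hn'] at he
      exact hne' he.symm
    have hlen : (tp hG u n').length = (tp hG u w).length + (tp hG w n').length := by
      rw [tp_append hG hb, Walk.length_append]
    have hpos : 0 < (tp hG w n').length := tp_length_pos hG (G.ne_of_adj hn')
    have := hmax n' (btw_prefix hG hb hw)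
    omega
  rw [deg, Set.ncard_eq_one]
  refine ⟨dirV hG w u, ?_⟩
  apply Set.Subset.antisymm
  · intro c hc
    exact huniq c hc
  · intro c hc
    simp only [Set.mem_singleton_iff] at hc
    subst hc
    exact dirV_adj hG hwu

/-- Given an interior (≥ 3 directions) vertex on the path from x to y, find a vertex
in a third direction whose median with x, y is u. -/
lemma exists_leaf_med (hG : G.IsTree) {x u y : V} (h : Btw hG x u y) (hx : u ≠ x)
    (hy : u ≠ y) (hd : deg G u ≠ 2) :
    ∃ w, deg G w = 1 ∧ w ≠ u ∧ med hG x y w = u := by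
  obtain ⟨n, hn, hn1, hn2⟩ := exists_third_nbr (dirV_adj hG hx) (dirV_adj hG hy)
    (dirV_ne_of_btw hG h (Ne.symm hx) (Ne.symm hy)) hd
  obtain ⟨w, hw1, hw2⟩ := exists_leaf_beyond hG hn
  have hwu : w ≠ u := by
    rintro rfl
    exact hn.ne (btw_self hG hw2).symm
  have hdw : dirV hG u w = n := by
    rw [← dirV_eq_of_btw hG hw2 hn.ne', dirV_adj_eq hG hn]
  have hbxw : Btw hG x u w := by
    apply btw_of_dirV_ne hG (Ne.symm hx) hwu
    rw [hdw]
    exact fun e => hn1 e.symm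
  have hbyw : Btw hG y u w := by
    apply btw_of_dirV_ne hG (Ne.symm hy) hwu
    rw [hdw]
    exact fun e => hn2 e.symm
  exact ⟨w, hw1, hwu, med_unique hG ⟨h, hbyw, hbxw⟩⟩
end Deg

/-- If `w` hangs off the path `[x,y]` at `a` and `z` hangs off at `b ≠ a`, with `a`
closer to `x`, then `a` lies on the path from `w` to `z`. -/
lemma btw_junction (hG : G.IsTree) {x y z w a b : V} (hz : med hG x y z = b)
    (hw : med hG x y w = a) (hab : Btw hG x a b) (hne : a ≠ b) : Btw hG w a z := by
  apply btw_glue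
  intro c hc1 hc2
  have hxbz : Btw hG x b z := hz ▸ med_btw₃ hG x y z
  have habz : Btw hG a b z := btw_mirror hG hxbz hab
  rcases (btw_iff_append hG habz).1 hc2 with h | h
  · have hxcb : Btw hG x c b := btw_suffix hG hab h
    have hxcy : Btw hG x c y := btw_prefix hG (hz ▸ med_btw₁ hG x y z) hxcb
    exact leg_inter hG hw hc1 hxcy
  · have e1 : med hG x y c = b := med_of_leg hG hz h
    have e2 : med hG x y c = a := med_of_leg hG hw (btw_symm hG hc1)
    exact absurd (e2.symm.trans e1) hne

lemma med_three (hG : G.IsTree) {x y z e u b : V} (hz : med hG x y z = b)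
    (he : med hG x y e = u) (hub : Btw hG x u b) (hne : u ≠ b) :
    med hG x e z = u ∧ med hG y e z = b := by
  constructor
  · have h1 : Btw hG x u e := he ▸ med_btw₃ hG x y e
    have h2 : Btw hG x u z := btw_prefix hG (hz ▸ med_btw₃ hG x y z) hub
    rw [med_reduce hG h1 h2]
    exact med_eq_left_of_btw hG (btw_junction hG hz he hub hne)
  · have hxby : Btw hG x b y := hz ▸ med_btw₁ hG x y z
    have hybu : Btw hG y b u := btw_symm hG (btw_mirror hG hxby hub)
    have hyue : Btw hG y u e := he ▸ med_btw₂ hG x y e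
    have h1 : Btw hG y b e := btw_prefix hG hyue hybu
    have h2 : Btw hG y b z := hz ▸ med_btw₂ hG x y z
    rw [med_reduce hG h1 h2]
    have he' : med hG y x e = u := (med_swap₁₂ hG x y e).trans he
    have hz' : med hG y x z = b := (med_swap₁₂ hG x y z).trans hz
    exact med_eq_left_of_btw hG (btw_symm hG (btw_junction hG he' hz' hybu (Ne.symm hne)))

section LeafTree
variable [Fintype V] {leaf : X → V}

lemma exists_second_nbr {v a : V} (h2 : 2 ≤ deg G v) (ha : G.Adj v a) :
    ∃ b, G.Adj v b ∧ b ≠ a := by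
  by_contra hno
  push_neg at hno
  have hsub : G.neighborSet v ⊆ {a} := fun c hc => hno c hc
  have := Set.ncard_le_ncard hsub (Set.toFinite _)
  rw [Set.ncard_singleton] at this
  rw [deg] at h2
  omega

lemma deg_ne_zero (hG : G.IsTree) {v u : V} (h : u ≠ v) : deg G v ≠ 0 := by
  intro h0
  have := dirV_adj hG (Ne.symm h)
  have hmem : dirV hG v u ∈ G.neighborSet v := this
  have : (G.neighborSet v).ncard ≠ 0 := by
    have hne : (G.neighborSet v).Nonempty := ⟨_, hmem⟩
    simpa [Set.ncard_eq_zero (Set.toFinite _)] using hne.ne_empty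
  exact this h0

/-- Every vertex of a phylogenetic tree is the median of three leaves. -/
lemma med_surj (hG : G.IsTree)
    (hli : ∀ v : V, (∃ x : X, leaf x = v) ↔ deg G v = 1)
    (hd2 : ∀ v : V, deg G v ≠ 2) {x₀ y₀ : X} (hxy₀ : leaf x₀ ≠ leaf y₀) (v : V) :
    ∃ x y z : X, med hG (leaf x) (leaf y) (leaf z) = v := by
  rcases Nat.lt_or_ge (deg G v) 2 with hlt | hge
  · interval_cases h : deg G v
    · -- degree 0: impossible
      exfalso
      rcases eq_or_ne (leaf x₀) v with hv | hv
      · exact deg_ne_zero hG (show leaf y₀ ≠ v by rw [← hv]; exact Ne.symm hxy₀) h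
      · exact deg_ne_zero hG hv h
    · obtain ⟨x, hx⟩ := (hli v).2 h
      exact ⟨x, x, x, by rw [hx]; exact med_self₁ hG v v⟩
  · have h3 : 3 ≤ deg G v := by
      have := hd2 v
      omega
    obtain ⟨n₁, hn₁⟩ : ∃ n, G.Adj v n := by
      rcases Set.ncard_pos (Set.toFinite (G.neighborSet v)) |>.1 (by rw [deg] at hge; omega) with ⟨n, hn⟩
      exact ⟨n, hn⟩
    obtain ⟨n₂, hn₂, hn₂₁⟩ := exists_second_nbr (by omega) hn₁
    obtain ⟨n₃, hn₃, hn₃₁, hn₃₂⟩ := exists_third_nbr hn₁ hn₂ (Ne.symm hn₂₁) (hd2 v)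
    obtain ⟨w₁, hw₁d, hw₁⟩ := exists_leaf_beyond hG hn₁
    obtain ⟨w₂, hw₂d, hw₂⟩ := exists_leaf_beyond hG hn₂
    obtain ⟨w₃, hw₃d, hw₃⟩ := exists_leaf_beyond hG hn₃
    have key : ∀ {n w : V}, G.Adj v n → Btw hG v n w → w ≠ v ∧ dirV hG v w = n := by
      intro n w hn hw
      have hwv : w ≠ v := by
        rintro rfl
        exact hn.ne (btw_self hG hw).symm
      exact ⟨hwv, by rw [← dirV_eq_of_btw hG hw hn.ne', dirV_adj_eq hG hn]⟩
    obtain ⟨hv₁, hd₁⟩ := key hn₁ hw₁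
    obtain ⟨hv₂, hd₂'⟩ := key hn₂ hw₂
    obtain ⟨hv₃, hd₃⟩ := key hn₃ hw₃
    have b₁₂ : Btw hG w₁ v w₂ := btw_of_dirV_ne hG hv₁ hv₂ (by rw [hd₁, hd₂']; exact Ne.symm hn₂₁)
    have b₂₃ : Btw hG w₂ v w₃ := btw_of_dirV_ne hG hv₂ hv₃ (by rw [hd₂', hd₃]; exact Ne.symm hn₃₂)
    have b₁₃ : Btw hG w₁ v w₃ := btw_of_dirV_ne hG hv₁ hv₃ (by rw [hd₁, hd₃]; exact Ne.symm hn₃₁)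
    obtain ⟨x, hx⟩ := (hli w₁).2 hw₁d
    obtain ⟨y, hy⟩ := (hli w₂).2 hw₂d
    obtain ⟨z, hz⟩ := (hli w₃).2 hw₃d
    refine ⟨x, y, z, ?_⟩
    rw [hx, hy, hz]
    exact med_unique hG ⟨b₁₂, b₂₃, b₁₃⟩

/-- A vertex on the path between two leaves is the median of a leaf triple containing them. -/
lemma mem_path_rep (hG : G.IsTree)
    (hli : ∀ v : V, (∃ x : X, leaf x = v) ↔ deg G v = 1)
    (hd2 : ∀ v : V, deg G v ≠ 2) {p q : X} {w : V}
    (h : Btw hG (leaf p) w (leaf q)) : ∃ c : X, med hG (leaf p) (leaf q) (leaf c) = w := by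
  rcases eq_or_ne w (leaf p) with rfl | hp
  · exact ⟨p, med_self₃ hG (leaf p) (leaf q)⟩
  rcases eq_or_ne w (leaf q) with rfl | hq
  · exact ⟨q, med_self₂ hG (leaf p) (leaf q)⟩
  obtain ⟨wv, hwd, _, hwm⟩ := exists_leaf_med hG h hp hq (hd2 w)
  obtain ⟨c, hc⟩ := (hli wv).2 hwd
  exact ⟨c, by rw [hc]; exact hwm⟩

end LeafTree

lemma adj_iff_btw (hG : G.IsTree) {u v : V} :
    G.Adj u v ↔ u ≠ v ∧ ∀ w, Btw hG u w v → w = u ∨ w = v := by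
  constructor
  · intro h
    exact ⟨h.ne, fun w hw => btw_adj hG h hw⟩
  · rintro ⟨hne, hw⟩
    have hs := dirV_btw hG u v
    have hadj := dirV_adj hG hne
    rcases hw _ hs with h | h
    · exact absurd h hadj.ne'
    · rwa [h] at hadj

section LeafTree2
variable [Fintype V] {leaf : X → V}

lemma exists_leaf_side (hG : G.IsTree)
    (hli : ∀ v : V, (∃ x : X, leaf x = v) ↔ deg G v = 1)
    (hd2 : ∀ v : V, deg G v ≠ 2) {u s w : V} (hsu : s ≠ u) (hwu : w ≠ u) :
    ∃ p : X, Btw hG (leaf p) u s ∧ ¬ Btw hG (leaf p) w u := by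
  rcases Nat.lt_or_ge (deg G u) 2 with hlt | hge
  · interval_cases h : deg G u
    · exact absurd h (deg_ne_zero hG hsu)
    · obtain ⟨p, hp⟩ := (hli u).2 h
      refine ⟨p, ?_, ?_⟩
      · rw [hp]; exact btw_left hG u s
      · rw [hp]; intro hb; exact hwu (btw_self hG hb)
  · have has : G.Adj u (dirV hG u s) := dirV_adj hG (Ne.symm hsu)
    have haw : G.Adj u (dirV hG u w) := dirV_adj hG (Ne.symm hwu)
    obtain ⟨n, hn, hns, hnw⟩ :
        ∃ n, G.Adj u n ∧ n ≠ dirV hG u s ∧ n ≠ dirV hG u w := by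
      rcases eq_or_ne (dirV hG u s) (dirV hG u w) with he | he
      · obtain ⟨n, hn, hne⟩ := exists_second_nbr hge has
        exact ⟨n, hn, hne, he ▸ hne⟩
      · obtain ⟨n, hn, h1, h2⟩ := exists_third_nbr has haw he (hd2 u)
        exact ⟨n, hn, h1, h2⟩
    obtain ⟨wv, hwv1, hwv2⟩ := exists_leaf_beyond hG hn
    obtain ⟨p, hp⟩ := (hli wv).2 hwv1
    have hpu : wv ≠ u := by rintro rfl; exact hn.ne (btw_self hG hwv2).symm
    have hdp : dirV hG u wv = n := by
      rw [← dirV_eq_of_btw hG hwv2 hn.ne', dirV_adj_eq hG hn]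
    refine ⟨p, ?_, ?_⟩
    · rw [hp]
      exact btw_of_dirV_ne hG hpu hsu (by rw [hdp]; exact hns)
    · rw [hp]
      intro hb
      have hd : dirV hG u w = dirV hG u wv := dirV_eq_of_btw hG (btw_symm hG hb) hwu
      rw [hdp] at hd
      exact hnw hd.symm

lemma btw_char (hG : G.IsTree)
    (hli : ∀ v : V, (∃ x : X, leaf x = v) ↔ deg G v = 1)
    (hd2 : ∀ v : V, deg G v ≠ 2) {u v w : V} :
    Btw hG u w v ↔ ∀ p q : X, Btw hG (leaf p) u (leaf q) → Btw hG (leaf p) v (leaf q) →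
      Btw hG (leaf p) w (leaf q) := by
  constructor
  · intro h p q hu hv'
    rcases btw_total hG hu hv' with huv | hvu
    · exact btw_prefix hG hv' (btw_suffix hG huv h)
    · exact btw_prefix hG hu (btw_suffix hG hvu (btw_symm hG h))
  · intro H
    by_contra hnb
    have hwu : w ≠ u := by rintro rfl; exact hnb (btw_left hG w v)
    have hwv : w ≠ v := by rintro rfl; exact hnb (btw_right hG u w)
    rcases eq_or_ne u v with rfl | huv
    · rcases Nat.lt_or_ge (deg G u) 2 with hlt | hge
      · interval_cases h : deg G u
        · exact absurd h (deg_ne_zero hG hwu)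
        · obtain ⟨p, hp⟩ := (hli u).2 h
          have h2 := H p p (by rw [hp]; exact btw_left hG u u) (by rw [hp]; exact btw_left hG u u)
          rw [hp] at h2
          exact hwu (btw_self hG h2)
      · have hdw : G.Adj u (dirV hG u w) := dirV_adj hG (Ne.symm hwu)
        obtain ⟨n₂, hn₂, hn₂w⟩ := exists_second_nbr hge hdw
        obtain ⟨n₃, hn₃, h31, h32⟩ := exists_third_nbr hdw hn₂ (Ne.symm hn₂w) (hd2 u)
        obtain ⟨wp, hwp1, hwp2⟩ := exists_leaf_beyond hG hn₂
        obtain ⟨wq, hwq1, hwq2⟩ := exists_leaf_beyond hG hn₃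
        obtain ⟨p, hp⟩ := (hli wp).2 hwp1
        obtain ⟨q, hq⟩ := (hli wq).2 hwq1
        have hpu : wp ≠ u := by rintro rfl; exact hn₂.ne (btw_self hG hwp2).symm
        have hqu : wq ≠ u := by rintro rfl; exact hn₃.ne (btw_self hG hwq2).symm
        have hdp : dirV hG u wp = n₂ := by
          rw [← dirV_eq_of_btw hG hwp2 hn₂.ne', dirV_adj_eq hG hn₂]
        have hdq : dirV hG u wq = n₃ := by
          rw [← dirV_eq_of_btw hG hwq2 hn₃.ne', dirV_adj_eq hG hn₃]
        have hpq : Btw hG wp u wq :=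
          btw_of_dirV_ne hG hpu hqu (by rw [hdp, hdq]; exact Ne.symm h32)
        have hw' := H p q (by rw [hp, hq]; exact hpq) (by rw [hp, hq]; exact hpq)
        rw [hp, hq] at hw'
        rcases (btw_iff_append hG hpq).1 hw' with h | h
        · have hd : dirV hG u w = dirV hG u wp := dirV_eq_of_btw hG (btw_symm hG h) hwu
          rw [hdp] at hd
          exact hn₂w hd.symm
        · have hd : dirV hG u w = dirV hG u wq := dirV_eq_of_btw hG h hwu
          rw [hdq] at hd
          exact h31 hd.symm
    · obtain ⟨p, hp1, hp2⟩ := exists_leaf_side hG hli hd2 (Ne.symm huv) hwu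
      obtain ⟨q, hq1, hq2⟩ := exists_leaf_side hG hli hd2 huv hwv
      have hpvq : Btw hG (leaf p) v (leaf q) := by
        apply btw_glue
        intro c hc1 hc2
        rcases (btw_iff_append hG hp1).1 hc1 with h | h
        · have h1 : Btw hG c u v := btw_mirror hG hp1 h
          have h2 : Btw hG u v c := btw_sandwich hG (btw_symm hG hq1) hc2
          exact absurd (btw_antisymm hG h1 (btw_symm hG h2)) huv
        · exact btw_inter hG (btw_symm hG hq1) h hc2
      have hpuq : Btw hG (leaf p) u (leaf q) := btw_prefix hG hpvq hp1
      have hwpq := H p q hpuq hpvq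
      rcases (btw_iff_append hG hpvq).1 hwpq with h | h
      · rcases (btw_iff_append hG hp1).1 h with h' | h'
        · exact hp2 h'
        · exact hnb h'
      · exact hq2 (btw_symm hG h)

end LeafTree2
end TreeGeom

section TwoTrees
open SimpleGraph
variable {V₁ V₂ : Type} [Fintype V₁] [Fintype V₂]
  {G₁ : SimpleGraph V₁} {G₂ : SimpleGraph V₂} {leaf₁ : X → V₁} {leaf₂ : X → V₂}
  {t₁ : V₁ → Option M} {t₂ : V₂ → Option M} {δ : X → X → X → Option M}

/-- If the second-tree medians of `x,y,w` and `x,y,z` differ (with the former closer to `x`)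
while the first-tree medians agree, we get a contradiction. -/
lemma swap_core (h₁ : G₁.IsTree) (h₂ : G₂.IsTree)
    (hli₁ : ∀ v : V₁, (∃ x : X, leaf₁ x = v) ↔ deg G₁ v = 1)
    (hli₂ : ∀ v : V₂, (∃ x : X, leaf₂ x = v) ↔ deg G₂ v = 1)
    (hd₂ : ∀ v : V₂, deg G₂ v ≠ 2)
    (hinj₂ : Function.Injective leaf₂)
    (hdisc₂ : ∀ u v : V₂, G₂.Adj u v → t₂ u ≠ t₂ v)
    (hdel₁ : ∀ x y z : X, δ x y z = t₁ (med h₁ (leaf₁ x) (leaf₁ y) (leaf₁ z)))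
    (hdel₂ : ∀ x y z : X, δ x y z = t₂ (med h₂ (leaf₂ x) (leaf₂ y) (leaf₂ z)))
    {x y z w : X} (hxy : x ≠ y) (hzy : z ≠ y) (hwx : w ≠ x)
    (hmm : med h₁ (leaf₁ x) (leaf₁ y) (leaf₁ z) = med h₁ (leaf₁ x) (leaf₁ y) (leaf₁ w))
    (horder : Btw h₂ (leaf₂ x) (med h₂ (leaf₂ x) (leaf₂ y) (leaf₂ w))
      (med h₂ (leaf₂ x) (leaf₂ y) (leaf₂ z)))
    (hab : med h₂ (leaf₂ x) (leaf₂ y) (leaf₂ w) ≠ med h₂ (leaf₂ x) (leaf₂ y) (leaf₂ z)) :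
    False := by
  set X2 := leaf₂ x with hX2
  set Y2 := leaf₂ y with hY2
  set a := med h₂ X2 Y2 (leaf₂ w) with hadef
  set b := med h₂ X2 Y2 (leaf₂ z) with hbdef
  set v := med h₁ (leaf₁ x) (leaf₁ y) (leaf₁ z) with hvdef
  have hmw : med h₁ (leaf₁ x) (leaf₁ y) (leaf₁ w) = v := hmm.symm
  have hta : t₂ a = t₁ v := by
    have e1 := hdel₂ x y w
    have e2 := hdel₁ x y w
    rw [hmw] at e2
    rw [← hadef] at e1
    exact e1.symm.trans e2
  have htb : t₂ b = t₁ v := by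
    have e1 := hdel₂ x y z
    have e2 := hdel₁ x y z
    rw [← hvdef] at e2
    rw [← hbdef] at e1
    exact e1.symm.trans e2
  have hldeg : ∀ s : X, deg G₂ (leaf₂ s) = 1 := fun s => (hli₂ _).1 ⟨s, rfl⟩
  have key_leaf : ∀ {s r c : X}, med h₂ (leaf₂ s) (leaf₂ r) (leaf₂ c) = leaf₂ s →
      s ≠ r → c = s := by
    intro s r c hm hsr
    have hb2 : Btw h₂ (leaf₂ r) (leaf₂ s) (leaf₂ c) := hm ▸ med_btw₂ h₂ _ _ _
    rcases leaf_btw_eq h₂ (hldeg s) hb2 with h | h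
    · exact absurd (hinj₂ h) hsr
    · exact (hinj₂ h.symm)
  have hxab : Btw h₂ X2 a b := horder
  have hxby : Btw h₂ X2 b Y2 := hbdef ▸ med_btw₁ h₂ X2 Y2 (leaf₂ z)
  have hxay : Btw h₂ X2 a Y2 := hadef ▸ med_btw₁ h₂ X2 Y2 (leaf₂ w)
  have hybz : Btw h₂ Y2 b (leaf₂ z) := hbdef ▸ med_btw₂ h₂ X2 Y2 (leaf₂ z)
  have hyaw : Btw h₂ Y2 a (leaf₂ w) := hadef ▸ med_btw₂ h₂ X2 Y2 (leaf₂ w)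
  -- main claim: anything strictly between a and b has label t₁ v
  have claim : ∀ u : V₂, Btw h₂ a u b → u ≠ a → u ≠ b → t₂ u = t₁ v := by
    intro u hu hua hub
    have hxub : Btw h₂ X2 u b := btw_suffix h₂ hxab hu
    have hxuy : Btw h₂ X2 u Y2 := btw_prefix h₂ hxby hxub
    have hux : u ≠ X2 := by
      intro h
      have h1 : a = X2 := btw_inter h₂ (h ▸ hu) (btw_left h₂ a X2) hxab
      exact hwx (key_leaf (hadef.symm.trans h1) hxy)
    have huy : u ≠ Y2 := by
      intro h
      have h1 : Btw h₂ Y2 b a :=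
        btw_sandwich h₂ (btw_symm h₂ hxby) (btw_symm h₂ hxab)
      have h2 : b = Y2 := btw_inter h₂ (h ▸ hu) (btw_symm h₂ h1) (btw_right h₂ Y2 b)
      have hm2 : med h₂ (leaf₂ y) (leaf₂ x) (leaf₂ z) = leaf₂ y :=
        (med_swap₁₂ h₂ X2 Y2 (leaf₂ z)).trans (hbdef.symm.trans h2)
      exact hzy (key_leaf hm2 (Ne.symm hxy))
    obtain ⟨ev, hev1, hev2, hev3⟩ := exists_leaf_med h₂ hxuy hux huy (hd₂ u)
    obtain ⟨e, he⟩ := (hli₂ ev).2 hev1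
    have hme : med h₂ X2 Y2 (leaf₂ e) = u := by rw [he]; exact hev3
    have hC45 := med_three h₂ hbdef.symm hme hxub hub
    have hxau : Btw h₂ X2 a u := btw_sandwich h₂ hxab hu
    have hyua : Btw h₂ Y2 u a := btw_symm h₂ (btw_mirror h₂ hxuy hxau)
    have hC67 := med_three h₂ (x := Y2) (y := X2)
      ((med_swap₁₂ h₂ X2 Y2 (leaf₂ w)).trans hadef.symm)
      ((med_swap₁₂ h₂ X2 Y2 (leaf₂ e)).trans hme) hyua hua
    -- hC45 : med₂ X2 (leaf₂ e) (leaf₂ z) = u ∧ med₂ Y2 (leaf₂ e) (leaf₂ z) = b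
    -- hC67 : med₂ Y2 (leaf₂ e) (leaf₂ w) = u ∧ med₂ X2 (leaf₂ e) (leaf₂ w) = a
    set c := med h₁ (leaf₁ x) (leaf₁ y) (leaf₁ e) with hcdef
    rcases eq_or_ne c v with hcv | hcv
    · -- e also attaches at v in tree 1
      have e1 : med h₁ (leaf₁ x) (leaf₁ e) (leaf₁ z) = med h₁ v (leaf₁ e) (leaf₁ z) :=
        med_reduce h₁ (hcv ▸ hcdef ▸ med_btw₃ h₁ (leaf₁ x) (leaf₁ y) (leaf₁ e))
          (hvdef ▸ med_btw₃ h₁ (leaf₁ x) (leaf₁ y) (leaf₁ z))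
      have e2 : med h₁ (leaf₁ y) (leaf₁ e) (leaf₁ z) = med h₁ v (leaf₁ e) (leaf₁ z) :=
        med_reduce h₁ (hcv ▸ hcdef ▸ med_btw₂ h₁ (leaf₁ x) (leaf₁ y) (leaf₁ e))
          (hvdef ▸ med_btw₂ h₁ (leaf₁ x) (leaf₁ y) (leaf₁ z))
      have hδ : δ x e z = δ y e z := by
        rw [hdel₁, hdel₁, e1, e2]
      have r1 : δ x e z = t₂ u := by rw [hdel₂]; exact congrArg t₂ hC45.1
      have r2 : δ y e z = t₂ b := by rw [hdel₂]; exact congrArg t₂ hC45.2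
      rw [r1, r2] at hδ
      rw [hδ]
      exact htb
    · rcases btw_total h₁ (hcdef ▸ med_btw₁ h₁ (leaf₁ x) (leaf₁ y) (leaf₁ e))
        (hvdef ▸ med_btw₁ h₁ (leaf₁ x) (leaf₁ y) (leaf₁ z)) with hcv' | hvc'
      · -- Btw x1 c v : e attaches closer to x in tree 1
        have hyvc : Btw h₁ (leaf₁ y) v c := btw_symm h₁
          (btw_mirror h₁ (hvdef ▸ med_btw₁ h₁ (leaf₁ x) (leaf₁ y) (leaf₁ z)) hcv')
        have hyve : Btw h₁ (leaf₁ y) v (leaf₁ e) :=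
          btw_prefix h₁ (hcdef ▸ med_btw₂ h₁ (leaf₁ x) (leaf₁ y) (leaf₁ e)) hyvc
        have hyvw : Btw h₁ (leaf₁ y) v (leaf₁ w) := hmw ▸ med_btw₂ h₁ (leaf₁ x) (leaf₁ y) (leaf₁ w)
        have e1 : med h₁ (leaf₁ y) (leaf₁ e) (leaf₁ w) = v := by
          rw [med_reduce h₁ hyve hyvw]
          refine med_eq_left_of_btw h₁ (btw_symm h₁ ?_)
          exact btw_junction h₁ ((med_swap₁₂ h₁ _ _ _).trans hcdef.symm)
            ((med_swap₁₂ h₁ _ _ _).trans hmw) hyvc (Ne.symm hcv)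
        have r1 : δ y e w = t₂ u := by rw [hdel₂]; exact congrArg t₂ hC67.1
        have r2 : δ y e w = t₁ v := by rw [hdel₁, e1]
        rw [← r1, r2]
      · -- Btw x1 v c
        have hxve : Btw h₁ (leaf₁ x) v (leaf₁ e) :=
          btw_prefix h₁ (hcdef ▸ med_btw₃ h₁ (leaf₁ x) (leaf₁ y) (leaf₁ e)) hvc'
        have hxvz : Btw h₁ (leaf₁ x) v (leaf₁ z) := hvdef ▸ med_btw₃ h₁ (leaf₁ x) (leaf₁ y) (leaf₁ z)
        have e1 : med h₁ (leaf₁ x) (leaf₁ e) (leaf₁ z) = v := by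
          rw [med_reduce h₁ hxve hxvz]
          refine med_eq_left_of_btw h₁ (btw_symm h₁ ?_)
          exact btw_junction h₁ hcdef.symm hvdef.symm hvc' hcv.symm
        have r1 : δ x e z = t₂ u := by rw [hdel₂]; exact congrArg t₂ hC45.1
        have r2 : δ x e z = t₁ v := by rw [hdel₁, e1]
        rw [← r1, r2]
  -- now derive the contradiction along the first edge of [a,b]
  have hane : a ≠ b := hab
  have hs_adj : G₂.Adj a (dirV h₂ a b) := dirV_adj h₂ hane
  have hs_btw : Btw h₂ a (dirV h₂ a b) b := dirV_btw h₂ a b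
  rcases eq_or_ne (dirV h₂ a b) b with hsb | hsb
  · exact hdisc₂ a _ hs_adj (by rw [hsb, hta, htb])
  · have := claim _ hs_btw (hs_adj.ne') hsb
    exact hdisc₂ a _ hs_adj (by rw [this, hta])

lemma med_leaf_eq {V X : Type} {G : SimpleGraph V} {leaf : X → V} [Fintype V]
    (hG : G.IsTree) (hli : ∀ v : V, (∃ x : X, leaf x = v) ↔ deg G v = 1)
    (hinj : Function.Injective leaf) {s r c : X}
    (hm : med hG (leaf s) (leaf r) (leaf c) = leaf s) (hsr : s ≠ r) : c = s := by
  have hb2 : Btw hG (leaf r) (leaf s) (leaf c) := hm ▸ med_btw₂ hG _ _ _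
  rcases leaf_btw_eq hG ((hli _).1 ⟨s, rfl⟩) hb2 with h | h
  · exact absurd (hinj h) hsr
  · exact hinj h.symm

lemma swap_lemma (h₁ : G₁.IsTree) (h₂ : G₂.IsTree)
    (hli₁ : ∀ v : V₁, (∃ x : X, leaf₁ x = v) ↔ deg G₁ v = 1)
    (hli₂ : ∀ v : V₂, (∃ x : X, leaf₂ x = v) ↔ deg G₂ v = 1)
    (hd₂ : ∀ v : V₂, deg G₂ v ≠ 2)
    (hinj₁ : Function.Injective leaf₁) (hinj₂ : Function.Injective leaf₂)
    (hdisc₂ : ∀ u v : V₂, G₂.Adj u v → t₂ u ≠ t₂ v)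
    (hdel₁ : ∀ x y z : X, δ x y z = t₁ (med h₁ (leaf₁ x) (leaf₁ y) (leaf₁ z)))
    (hdel₂ : ∀ x y z : X, δ x y z = t₂ (med h₂ (leaf₂ x) (leaf₂ y) (leaf₂ z)))
    {x y z w : X}
    (hmm : med h₁ (leaf₁ x) (leaf₁ y) (leaf₁ z) = med h₁ (leaf₁ x) (leaf₁ y) (leaf₁ w)) :
    med h₂ (leaf₂ x) (leaf₂ y) (leaf₂ z) = med h₂ (leaf₂ x) (leaf₂ y) (leaf₂ w) := by
  by_cases hxy : x = y
  · subst hxy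
    rw [med_self₁, med_self₁]
  by_cases hzw : z = w
  · subst hzw; rfl
  by_cases hzx : z = x
  · subst hzx
    rw [med_self₃] at hmm ⊢
    have hw : w = z := med_leaf_eq h₁ hli₁ hinj₁ hmm.symm hxy
    rw [hw, med_self₃]
  by_cases hwx : w = x
  · subst hwx
    rw [med_self₃] at hmm
    exact absurd (med_leaf_eq h₁ hli₁ hinj₁ hmm hxy) hzx
  by_cases hzy : z = y
  · subst hzy
    rw [med_self₂] at hmm ⊢
    have hm' : med h₁ (leaf₁ z) (leaf₁ x) (leaf₁ w) = leaf₁ z :=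
      (med_swap₁₂ h₁ _ _ _).trans hmm.symm
    have hw : w = z := med_leaf_eq h₁ hli₁ hinj₁ hm' (Ne.symm hxy)
    rw [hw, med_self₂]
  by_cases hwy : w = y
  · subst hwy
    rw [med_self₂] at hmm
    have hm' : med h₁ (leaf₁ w) (leaf₁ x) (leaf₁ z) = leaf₁ w :=
      (med_swap₁₂ h₁ _ _ _).trans hmm
    exact absurd (med_leaf_eq h₁ hli₁ hinj₁ hm' (Ne.symm hxy)) hzy
  rcases eq_or_ne (med h₂ (leaf₂ x) (leaf₂ y) (leaf₂ w)) (med h₂ (leaf₂ x) (leaf₂ y) (leaf₂ z))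
    with he | hne2
  · exact he.symm
  rcases btw_total h₂ (med_btw₁ h₂ (leaf₂ x) (leaf₂ y) (leaf₂ w))
    (med_btw₁ h₂ (leaf₂ x) (leaf₂ y) (leaf₂ z)) with ho | ho
  · exact (swap_core h₁ h₂ hli₁ hli₂ hd₂ hinj₂ hdisc₂ hdel₁ hdel₂ hxy hzy hwx hmm ho hne2).elim
  · exact (swap_core h₁ h₂ hli₁ hli₂ hd₂ hinj₂ hdisc₂ hdel₁ hdel₂ hxy hwy hzx hmm.symm ho
      (Ne.symm hne2)).elim

lemma master (h₁ : G₁.IsTree) (h₂ : G₂.IsTree)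
    (hli₁ : ∀ v : V₁, (∃ x : X, leaf₁ x = v) ↔ deg G₁ v = 1)
    (hli₂ : ∀ v : V₂, (∃ x : X, leaf₂ x = v) ↔ deg G₂ v = 1)
    (hd₂ : ∀ v : V₂, deg G₂ v ≠ 2)
    (hinj₁ : Function.Injective leaf₁) (hinj₂ : Function.Injective leaf₂)
    (hdisc₂ : ∀ u v : V₂, G₂.Adj u v → t₂ u ≠ t₂ v)
    (hdel₁ : ∀ x y z : X, δ x y z = t₁ (med h₁ (leaf₁ x) (leaf₁ y) (leaf₁ z)))
    (hdel₂ : ∀ x y z : X, δ x y z = t₂ (med h₂ (leaf₂ x) (leaf₂ y) (leaf₂ z)))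
    {x y z x' y' z' : X}
    (h : med h₁ (leaf₁ x) (leaf₁ y) (leaf₁ z) = med h₁ (leaf₁ x') (leaf₁ y') (leaf₁ z')) :
    med h₂ (leaf₂ x) (leaf₂ y) (leaf₂ z) = med h₂ (leaf₂ x') (leaf₂ y') (leaf₂ z') := by
  set v := med h₁ (leaf₁ x) (leaf₁ y) (leaf₁ z) with hvdef
  have hv' : med h₁ (leaf₁ x') (leaf₁ y') (leaf₁ z') = v := h.symm
  by_cases hv : ∃ p : X, leaf₁ p = v
  · obtain ⟨p, hp⟩ := hv
    have sub : ∀ a b c : X, med h₁ (leaf₁ a) (leaf₁ b) (leaf₁ c) = leaf₁ p →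
        med h₂ (leaf₂ a) (leaf₂ b) (leaf₂ c) = leaf₂ p := by
      intro a b c hm
      have hpd : deg G₁ (leaf₁ p) = 1 := (hli₁ _).1 ⟨p, rfl⟩
      have h1 := hm ▸ med_btw₁ h₁ (leaf₁ a) (leaf₁ b) (leaf₁ c)
      rcases leaf_btw_eq h₁ hpd h1 with hpa | hpb
      · have hpa' : p = a := hinj₁ hpa
        have h2 := hm ▸ med_btw₂ h₁ (leaf₁ a) (leaf₁ b) (leaf₁ c)
        rcases leaf_btw_eq h₁ hpd h2 with hq | hq
        · have hpb' : p = b := hinj₁ hq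
          rw [← hpa', ← hpb', med_self₁]
        · have hpc' : p = c := hinj₁ hq
          rw [← hpa', ← hpc', med_self₃]
      · have hpb' : p = b := hinj₁ hpb
        have h3 := hm ▸ med_btw₃ h₁ (leaf₁ a) (leaf₁ b) (leaf₁ c)
        rcases leaf_btw_eq h₁ hpd h3 with hq | hq
        · have hpa' : p = a := hinj₁ hq
          rw [← hpa', ← hpb', med_self₁]
        · have hpc' : p = c := hinj₁ hq
          rw [← hpb', ← hpc', med_self₂]
    exact (sub x y z hp.symm).trans (sub x' y' z' (hv'.trans hp.symm)).symm
  · -- v is an interior vertex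
    set Sep : X → X → Prop := fun a b => Btw h₁ (leaf₁ a) v (leaf₁ b) with hSep
    have ssym : ∀ {a b : X}, Sep a b → Sep b a := fun hs => btw_symm h₁ hs
    have good : ∀ {a b c : X}, Sep a b → Sep b c → Sep a c →
        med h₁ (leaf₁ a) (leaf₁ b) (leaf₁ c) = v := fun s1 s2 s3 => med_unique h₁ ⟨s1, s2, s3⟩
    have strans : ∀ {a b c : X}, Sep a c → ¬ Sep a b → Sep b c := by
      intro a b c hac hab
      have hm1 := med_btw₁ h₁ (leaf₁ a) (leaf₁ c) (leaf₁ b)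
      rcases (btw_iff_append h₁ hm1).1 hac with hcase | hcase
      · exact absurd (btw_prefix h₁ (med_btw₃ h₁ (leaf₁ a) (leaf₁ c) (leaf₁ b)) hcase) hab
      · exact btw_suffix h₁ (btw_symm h₁ (med_btw₂ h₁ (leaf₁ a) (leaf₁ c) (leaf₁ b))) hcase
    have swap' : ∀ {a b c c' : X}, med h₁ (leaf₁ a) (leaf₁ b) (leaf₁ c) = v →
        med h₁ (leaf₁ a) (leaf₁ b) (leaf₁ c') = v →
        med h₂ (leaf₂ a) (leaf₂ b) (leaf₂ c) = med h₂ (leaf₂ a) (leaf₂ b) (leaf₂ c') :=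
      fun hc hc' => swap_lemma h₁ h₂ hli₁ hli₂ hd₂ hinj₁ hinj₂ hdisc₂ hdel₁ hdel₂
        (hc.trans hc'.symm)
    obtain ⟨sxy, syz, sxz⟩ : Sep x y ∧ Sep y z ∧ Sep x z :=
      ⟨med_btw₁ h₁ _ _ _, med_btw₂ h₁ _ _ _, med_btw₃ h₁ _ _ _⟩
    have sxy' : Sep x' y' := by
      show Btw h₁ (leaf₁ x') v (leaf₁ y')
      rw [← hv']; exact med_btw₁ h₁ _ _ _
    have syz' : Sep y' z' := by
      show Btw h₁ (leaf₁ y') v (leaf₁ z')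
      rw [← hv']; exact med_btw₂ h₁ _ _ _
    have sxz' : Sep x' z' := by
      show Btw h₁ (leaf₁ x') v (leaf₁ z')
      rw [← hv']; exact med_btw₃ h₁ _ _ _
    have chain : ∀ p q r : X, Sep p q → Sep q r → Sep p r → Sep p x' → Sep q x' →
        med h₂ (leaf₂ p) (leaf₂ q) (leaf₂ r) = med h₂ (leaf₂ x') (leaf₂ y') (leaf₂ z') := by
      intro p q r hpq hqr hpr hpx' hqx'
      have e1 : med h₂ (leaf₂ p) (leaf₂ q) (leaf₂ r) = med h₂ (leaf₂ p) (leaf₂ q) (leaf₂ x') :=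
        swap' (good hpq hqr hpr) (good hpq hqx' hpx')
      by_cases hpy' : Sep p y'
      · have e2 : med h₂ (leaf₂ p) (leaf₂ x') (leaf₂ q) = med h₂ (leaf₂ p) (leaf₂ x') (leaf₂ y') :=
          swap' (good hpx' (ssym hqx') hpq) (good hpx' sxy' hpy')
        have e3 : med h₂ (leaf₂ y') (leaf₂ x') (leaf₂ p) = med h₂ (leaf₂ y') (leaf₂ x') (leaf₂ z') :=
          swap' (good (ssym sxy') (ssym hpx') (ssym hpy')) (good (ssym sxy') sxz' syz')
        calc med h₂ (leaf₂ p) (leaf₂ q) (leaf₂ r) = med h₂ (leaf₂ p) (leaf₂ q) (leaf₂ x') := e1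
          _ = med h₂ (leaf₂ p) (leaf₂ x') (leaf₂ q) := (med_swap₂₃ h₂ _ _ _).symm
          _ = med h₂ (leaf₂ p) (leaf₂ x') (leaf₂ y') := e2
          _ = med h₂ (leaf₂ y') (leaf₂ x') (leaf₂ p) := (med_swap₁₃ h₂ _ _ _).symm
          _ = med h₂ (leaf₂ y') (leaf₂ x') (leaf₂ z') := e3
          _ = med h₂ (leaf₂ x') (leaf₂ y') (leaf₂ z') := med_swap₁₂ h₂ _ _ _
      · have hqy' : Sep y' q := strans hpq hpy'
        have e2 : med h₂ (leaf₂ q) (leaf₂ x') (leaf₂ p) = med h₂ (leaf₂ q) (leaf₂ x') (leaf₂ y') :=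
          swap' (good hqx' (ssym hpx') (ssym hpq)) (good hqx' sxy' (ssym hqy'))
        have e3 : med h₂ (leaf₂ y') (leaf₂ x') (leaf₂ q) = med h₂ (leaf₂ y') (leaf₂ x') (leaf₂ z') :=
          swap' (good (ssym sxy') (ssym hqx') hqy') (good (ssym sxy') sxz' syz')
        calc med h₂ (leaf₂ p) (leaf₂ q) (leaf₂ r) = med h₂ (leaf₂ p) (leaf₂ q) (leaf₂ x') := e1
          _ = med h₂ (leaf₂ q) (leaf₂ p) (leaf₂ x') := (med_swap₁₂ h₂ _ _ _).symm
          _ = med h₂ (leaf₂ q) (leaf₂ x') (leaf₂ p) := (med_swap₂₃ h₂ _ _ _).symm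
          _ = med h₂ (leaf₂ q) (leaf₂ x') (leaf₂ y') := e2
          _ = med h₂ (leaf₂ y') (leaf₂ x') (leaf₂ q) := (med_swap₁₃ h₂ _ _ _).symm
          _ = med h₂ (leaf₂ y') (leaf₂ x') (leaf₂ z') := e3
          _ = med h₂ (leaf₂ x') (leaf₂ y') (leaf₂ z') := med_swap₁₂ h₂ _ _ _
    by_cases h2 : Sep x' y
    · by_cases h3 : Sep x' z
      · calc med h₂ (leaf₂ x) (leaf₂ y) (leaf₂ z) = med h₂ (leaf₂ y) (leaf₂ z) (leaf₂ x) := by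
              rw [med_swap₁₂ h₂, med_swap₂₃ h₂, med_swap₁₂ h₂]
          _ = _ := chain y z x syz (ssym sxz) (ssym sxy) (ssym h2) (ssym h3)
      · have h1 : Sep x' x := strans (ssym sxz) (fun hs => h3 (ssym hs))
        exact chain x y z sxy syz sxz (ssym h1) (ssym h2)
    · have h1 : Sep x' x := strans (ssym sxy) (fun hs => h2 (ssym hs))
      have h3 : Sep x' z := strans syz (fun hs => h2 (ssym hs))
      calc med h₂ (leaf₂ x) (leaf₂ y) (leaf₂ z) = med h₂ (leaf₂ x) (leaf₂ z) (leaf₂ y) :=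
            (med_swap₂₃ h₂ _ _ _).symm
        _ = _ := chain x z y sxz (ssym syz) sxy (ssym h1) (ssym h3)

end TwoTrees

lemma onPath_iff {G : SimpleGraph V} (hG : G.IsTree) {x y v : V} :
    OnPath G x y v ↔ Btw hG x v y := by
  constructor
  · intro h
    exact h (tp hG x y) (tp_isPath hG x y)
  · intro h p hp
    rw [tp_eq hG p hp]
    exact h

lemma isMedian_iff {G : SimpleGraph V} (hG : G.IsTree) {x y z m : V} :
    IsMedian G x y z m ↔ IsMed hG x y z m := by
  unfold IsMedian IsMed
  rw [onPath_iff hG, onPath_iff hG, onPath_iff hG]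



/-- Two discriminating symbolically dated phylogenetic trees inducing
the same ternary map are isomorphic by a graph isomorphism fixing `X` and
compatible with the dating maps. -/
theorem dated_tree_unique_up_to_iso
    {V₁ V₂ X M : Type} [Fintype V₁] [Fintype V₂] [Fintype X] [DecidableEq X]
    [Fintype M] [Nonempty M] (hX : 3 ≤ Fintype.card X)
    (G₁ : SimpleGraph V₁) (G₂ : SimpleGraph V₂) (leaf₁ : X → V₁) (leaf₂ : X → V₂)
    (t₁ : V₁ → Option M) (t₂ : V₂ → Option M)
    (hT₁ : IsPhyloTree G₁ leaf₁) (ht₁ : IsDatingMap leaf₁ t₁)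
    (hd₁ : Discriminating G₁ t₁)
    (hT₂ : IsPhyloTree G₂ leaf₂) (ht₂ : IsDatingMap leaf₂ t₂)
    (hd₂ : Discriminating G₂ t₂)
    (δ : X → X → X → Option M)
    (hδ₁ : InducedDelta G₁ leaf₁ t₁ δ) (hδ₂ : InducedDelta G₂ leaf₂ t₂ δ) :
    ∃ φ : G₁ ≃g G₂, (∀ x : X, φ (leaf₁ x) = leaf₂ x) ∧ ∀ v : V₁, t₂ (φ v) = t₁ v := by
  obtain ⟨h₁, hinj₁, hli₁, hnd₁⟩ := hT₁
  obtain ⟨h₂, hinj₂, hli₂, hnd₂⟩ := hT₂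
  have hdel₁ : ∀ x y z : X, δ x y z = t₁ (med h₁ (leaf₁ x) (leaf₁ y) (leaf₁ z)) := by
    intro x y z
    obtain ⟨m, hm, he⟩ := hδ₁ x y z
    rw [he, med_unique h₁ ((isMedian_iff h₁).1 hm)]
  have hdel₂ : ∀ x y z : X, δ x y z = t₂ (med h₂ (leaf₂ x) (leaf₂ y) (leaf₂ z)) := by
    intro x y z
    obtain ⟨m, hm, he⟩ := hδ₂ x y z
    rw [he, med_unique h₂ ((isMedian_iff h₂).1 hm)]
  have mas₁₂ := fun {x y z x' y' z' : X} h =>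
    master h₁ h₂ hli₁ hli₂ hnd₂ hinj₁ hinj₂ hd₂ hdel₁ hdel₂
      (x := x) (y := y) (z := z) (x' := x') (y' := y') (z' := z') h
  have mas₂₁ := fun {x y z x' y' z' : X} h =>
    master h₂ h₁ hli₂ hli₁ hnd₁ hinj₂ hinj₁ hd₁ hdel₂ hdel₁
      (x := x) (y := y) (z := z) (x' := x') (y' := y') (z' := z') h
  obtain ⟨x₀, y₀, hxy₀⟩ := Fintype.exists_pair_of_one_lt_card (by omega : 1 < Fintype.card X)
  have surj₁ := med_surj h₁ hli₁ hnd₁ (x₀ := x₀) (y₀ := y₀) (fun h => hxy₀ (hinj₁ h))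
  have surj₂ := med_surj h₂ hli₂ hnd₂ (x₀ := x₀) (y₀ := y₀) (fun h => hxy₀ (hinj₂ h))
  choose f1 f2 f3 hf using surj₁
  choose g1 g2 g3 hg using surj₂
  let F : V₁ → V₂ := fun u => med h₂ (leaf₂ (f1 u)) (leaf₂ (f2 u)) (leaf₂ (f3 u))
  let Fi : V₂ → V₁ := fun u => med h₁ (leaf₁ (g1 u)) (leaf₁ (g2 u)) (leaf₁ (g3 u))
  have key1 : ∀ a b c : X, F (med h₁ (leaf₁ a) (leaf₁ b) (leaf₁ c)) =
      med h₂ (leaf₂ a) (leaf₂ b) (leaf₂ c) := by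
    intro a b c
    exact mas₁₂ (hf (med h₁ (leaf₁ a) (leaf₁ b) (leaf₁ c)))
  have key2 : ∀ a b c : X, Fi (med h₂ (leaf₂ a) (leaf₂ b) (leaf₂ c)) =
      med h₁ (leaf₁ a) (leaf₁ b) (leaf₁ c) := by
    intro a b c
    exact mas₂₁ (hg (med h₂ (leaf₂ a) (leaf₂ b) (leaf₂ c)))
  have linv : ∀ u, Fi (F u) = u := fun u => (key2 (f1 u) (f2 u) (f3 u)).trans (hf u)
  have rinv : ∀ u, F (Fi u) = u := fun u => (key1 (g1 u) (g2 u) (g3 u)).trans (hg u)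
  have Rt : ∀ (p q : X) (w : V₁), Btw h₁ (leaf₁ p) w (leaf₁ q) ↔
      Btw h₂ (leaf₂ p) (F w) (leaf₂ q) := by
    intro p q w
    constructor
    · intro hb
      obtain ⟨c, hc⟩ := mem_path_rep h₁ hli₁ hnd₁ hb
      have := key1 p q c
      rw [hc] at this
      rw [this]
      exact med_btw₁ h₂ _ _ _
    · intro hb
      obtain ⟨c, hc⟩ := mem_path_rep h₂ hli₂ hnd₂ hb
      have hk := key2 p q c
      rw [hc, linv] at hk
      rw [hk]
      exact med_btw₁ h₁ _ _ _
  have Rt' : ∀ (p q : X) (w : V₂), Btw h₂ (leaf₂ p) w (leaf₂ q) ↔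
      Btw h₁ (leaf₁ p) (Fi w) (leaf₁ q) := by
    intro p q w
    rw [Rt p q (Fi w), rinv]
  have adj_dir : ∀ u v : V₁, G₁.Adj u v → G₂.Adj (F u) (F v) := by
    intro u v huv
    rw [adj_iff_btw h₂]
    obtain ⟨hne, hbet⟩ := (adj_iff_btw h₁).1 huv
    refine ⟨fun he => hne (by rw [← linv u, he, linv]), ?_⟩
    intro w₂ hw₂
    have hw2F : F (Fi w₂) = w₂ := rinv w₂
    rw [← hw2F] at hw₂
    have hb1 : Btw h₁ u (Fi w₂) v := by
      rw [btw_char h₁ hli₁ hnd₁]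
      intro p q h1 h2
      have := (btw_char h₂ hli₂ hnd₂).1 hw₂ p q ((Rt p q u).1 h1) ((Rt p q v).1 h2)
      exact (Rt p q (Fi w₂)).2 this
    rcases hbet _ hb1 with h | h
    · exact Or.inl (by rw [← hw2F, h])
    · exact Or.inr (by rw [← hw2F, h])
  have adj_dir' : ∀ u v : V₂, G₂.Adj u v → G₁.Adj (Fi u) (Fi v) := by
    intro u v huv
    rw [adj_iff_btw h₁]
    obtain ⟨hne, hbet⟩ := (adj_iff_btw h₂).1 huv
    refine ⟨fun he => hne (by rw [← rinv u, he, rinv]), ?_⟩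
    intro w₁ hw₁
    have hw1F : Fi (F w₁) = w₁ := linv w₁
    rw [← hw1F] at hw₁
    have hb1 : Btw h₂ u (F w₁) v := by
      rw [btw_char h₂ hli₂ hnd₂]
      intro p q h1 h2
      have := (btw_char h₁ hli₁ hnd₁).1 hw₁ p q ((Rt' p q u).1 h1) ((Rt' p q v).1 h2)
      exact (Rt' p q (F w₁)).2 this
    rcases hbet _ hb1 with h | h
    · exact Or.inl (by rw [← hw1F, h])
    · exact Or.inr (by rw [← hw1F, h])
  have map_rel : ∀ a b : V₁, G₂.Adj (F a) (F b) ↔ G₁.Adj a b := by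
    intro a b
    constructor
    · intro h
      have h2 : G₁.Adj (Fi (F a)) (Fi (F b)) := adj_dir' _ _ h
      rwa [linv, linv] at h2
    · exact adj_dir a b
  refine ⟨⟨⟨F, Fi, linv, rinv⟩, @fun a b => map_rel a b⟩, ?_, ?_⟩
  · intro x
    show F (leaf₁ x) = leaf₂ x
    have e : F (leaf₁ x) = F (med h₁ (leaf₁ x) (leaf₁ x) (leaf₁ x)) := by
      rw [med_self₁]
    rw [e, key1, med_self₁]
  · intro v
    show t₂ (F v) = t₁ v
    have hv : med h₁ (leaf₁ (f1 v)) (leaf₁ (f2 v)) (leaf₁ (f3 v)) = v := hf v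
    have e1 : t₁ v = δ (f1 v) (f2 v) (f3 v) := by rw [hdel₁, hv]
    have e2 : δ (f1 v) (f2 v) (f3 v) = t₂ (F v) := by rw [hdel₂]
    exact (e1.trans e2).symm

end PhyloPaper
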